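/- arXiv:2601.13071 — 2 statements merged into one kernel-verified Lean document; each statement's English description precedes it below -/
import Mathlib

section
/- Let s be an r×r Hermitian complex matrix (r ≥ 1) and set h = exp(s). Then log((tr h + tr h⁻¹)/(2r)) ≤ ‖s‖_F ≤ √r · log(tr h + tr h⁻¹), where ‖s‖_F = √(tr(s²)) is the Frobenius norm. Here tr h and tr h⁻¹ are real and tr h + tr h⁻¹ ≥ 2r, so both logarithms are well-defined and the right-hand side is nonnegative. -/
open Matrix Finset

lemma aux_trace_eq (r : ℕ) (s : Matrix (Fin r) (Fin r) ℂ) (hs : s.IsHermitian) :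
    (NormedSpace.exp s).trace = ∑ i, Complex.exp (hs.eigenvalues i) ∧
    (NormedSpace.exp s)⁻¹.trace = ∑ i, Complex.exp (-hs.eigenvalues i) ∧
    (s * s).trace = ∑ i, (hs.eigenvalues i : ℂ) ^ 2 := by
  set U : Matrix (Fin r) (Fin r) ℂ := (hs.eigenvectorUnitary : Matrix (Fin r) (Fin r) ℂ)
  have hU1 : U * star U = 1 := (Matrix.mem_unitaryGroup_iff).mp hs.eigenvectorUnitary.2
  have hU2 : star U * U = 1 := (Matrix.mem_unitaryGroup_iff').mp hs.eigenvectorUnitary.2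
  have hinv : U⁻¹ = star U := Matrix.inv_eq_right_inv hU1
  have hunit : IsUnit U := ⟨⟨U, star U, hU1, hU2⟩, rfl⟩
  have hspec : s = U * Matrix.diagonal (RCLike.ofReal ∘ hs.eigenvalues) * U⁻¹ := by
    rw [hinv]; exact hs.spectral_theorem
  have key : ∀ v : Fin r → ℂ,
      (NormedSpace.exp (U * Matrix.diagonal v * U⁻¹)).trace = ∑ i, Complex.exp (v i) := by
    intro v
    rw [Matrix.exp_conj U _ hunit, Matrix.trace_mul_comm, ← Matrix.mul_assoc, hinv, hU2,
      Matrix.one_mul, Matrix.exp_diagonal, Matrix.trace_diagonal]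
    congr 1; ext i
    rw [Pi.coe_exp, Complex.exp_eq_exp_ℂ]
  set D : Matrix (Fin r) (Fin r) ℂ := Matrix.diagonal (RCLike.ofReal ∘ hs.eigenvalues) with hD
  refine ⟨?_, ?_, ?_⟩
  · conv_lhs => rw [hspec]
    rw [key]
    rfl
  · have h1 : (NormedSpace.exp s)⁻¹ = NormedSpace.exp (-s) := (Matrix.exp_neg s).symm
    have hnegspec : -s = U * Matrix.diagonal (fun i => -(hs.eigenvalues i : ℂ)) * U⁻¹ := by
      conv_lhs => rw [hspec]
      rw [← Matrix.diagonal_neg]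
      simp only [Matrix.neg_mul, Matrix.mul_neg]
      rfl
    rw [h1]
    conv_lhs => rw [hnegspec]
    rw [key]
  · have hmul : s * s = U * (D * D) * U⁻¹ := by
      conv_lhs => rw [hspec]
      rw [hinv]
      simp only [Matrix.mul_assoc]
      rw [← Matrix.mul_assoc (star U) U, hU2, Matrix.one_mul]
    conv_lhs => rw [hmul]
    rw [Matrix.trace_mul_comm, ← Matrix.mul_assoc, hinv, hU2, Matrix.one_mul, hD,
      Matrix.diagonal_mul_diagonal, Matrix.trace_diagonal]
    congr 1; ext i
    simp [sq]

/-- For a Hermitian `r×r` matrix `s` with `h = exp s`: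
`log((tr h + tr h⁻¹)/(2r)) ≤ ‖s‖_F ≤ √r · log(tr h + tr h⁻¹)`,
where `‖s‖_F = √(tr(s²))`; moreover `tr h + tr h⁻¹` is real and `≥ 2r`. -/
theorem stmt2 (r : ℕ) (hr : 1 ≤ r) (s : Matrix (Fin r) (Fin r) ℂ)
    (hs : s.IsHermitian) :
    ((NormedSpace.exp s).trace + (NormedSpace.exp s)⁻¹.trace).im = 0 ∧
    (2 * (r : ℝ) ≤ ((NormedSpace.exp s).trace + (NormedSpace.exp s)⁻¹.trace).re) ∧
    Real.log (((NormedSpace.exp s).trace + (NormedSpace.exp s)⁻¹.trace).re / (2 * r))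
      ≤ Real.sqrt ((s * s).trace.re) ∧
    Real.sqrt ((s * s).trace.re)
      ≤ Real.sqrt r *
        Real.log (((NormedSpace.exp s).trace + (NormedSpace.exp s)⁻¹.trace).re) := by
  obtain ⟨h1, h2, h3⟩ := aux_trace_eq r s hs
  set lam := hs.eigenvalues with hlam
  -- convert to real sums
  have hT : ((NormedSpace.exp s).trace + (NormedSpace.exp s)⁻¹.trace)
      = ((∑ i, (Real.exp (lam i) + Real.exp (-lam i)) : ℝ) : ℂ) := by
    rw [h1, h2, ← Finset.sum_add_distrib]
    push_cast
    rfl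
  have hS : (s * s).trace = ((∑ i, (lam i) ^ 2 : ℝ) : ℂ) := by
    rw [h3]; push_cast; rfl
  set T : ℝ := ∑ i, (Real.exp (lam i) + Real.exp (-lam i)) with hTdef
  set S : ℝ := ∑ i, (lam i) ^ 2 with hSdef
  have hre : ((NormedSpace.exp s).trace + (NormedSpace.exp s)⁻¹.trace).re = T := by
    rw [hT]; simp
  have him : ((NormedSpace.exp s).trace + (NormedSpace.exp s)⁻¹.trace).im = 0 := by
    rw [hT]; simp
  have hSre : (s * s).trace.re = S := by rw [hS]; simp
  -- basic scalar facts
  have hterm2 : ∀ i : Fin r, (2 : ℝ) ≤ Real.exp (lam i) + Real.exp (-lam i) := by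
    intro i
    have a := Real.add_one_le_exp (lam i)
    have b := Real.add_one_le_exp (-lam i)
    linarith
  have hT2r : 2 * (r : ℝ) ≤ T := by
    calc 2 * (r : ℝ) = ∑ _i : Fin r, (2 : ℝ) := by simp [mul_comm]
    _ ≤ T := Finset.sum_le_sum fun i _ => hterm2 i
  have hrpos : (0 : ℝ) < r := by exact_mod_cast hr
  have hTpos : (0 : ℝ) < T := lt_of_lt_of_le (by linarith) hT2r
  have hSnn : 0 ≤ S := Finset.sum_nonneg fun i _ => sq_nonneg _
  have hM : ∀ i : Fin r, |lam i| ≤ Real.sqrt S := by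
    intro i
    rw [← Real.sqrt_sq_eq_abs]
    apply Real.sqrt_le_sqrt
    exact Finset.single_le_sum (f := fun i => (lam i)^2) (fun j _ => sq_nonneg _) (mem_univ i)
  -- log T bound per eigenvalue
  have hlogT : ∀ i : Fin r, |lam i| ≤ Real.log T := by
    intro i
    rw [← Real.log_exp |lam i|]
    apply Real.log_le_log (Real.exp_pos _)
    calc Real.exp |lam i| ≤ Real.exp (lam i) + Real.exp (-lam i) := by
          rcases abs_cases (lam i) with ⟨h, _⟩ | ⟨h, _⟩ <;> rw [h] <;>
            [skip; skip] <;> nlinarith [Real.exp_pos (lam i), Real.exp_pos (-lam i)]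
    _ ≤ T := Finset.single_le_sum (f := fun i => Real.exp (lam i) + Real.exp (-lam i))
          (fun j _ => by positivity) (mem_univ i)
  have hlogTnn : 0 ≤ Real.log T := by
    apply Real.log_nonneg
    have h1r : (1:ℝ) ≤ r := by exact_mod_cast hr
    linarith
  refine ⟨him, by rw [hre]; exact hT2r, ?_, ?_⟩
  · -- log (T/(2r)) ≤ √S
    rw [hre, hSre]
    have hdivpos : 0 < T / (2 * r) := by positivity
    rw [Real.log_le_iff_le_exp hdivpos]
    rw [div_le_iff₀ (by positivity)]
    calc T ≤ ∑ _i : Fin r, 2 * Real.exp (Real.sqrt S) := by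
          apply Finset.sum_le_sum
          intro i _
          have h1 : Real.exp (lam i) ≤ Real.exp (Real.sqrt S) :=
            Real.exp_le_exp.mpr (le_trans (le_abs_self _) (hM i))
          have h2 : Real.exp (-lam i) ≤ Real.exp (Real.sqrt S) :=
            Real.exp_le_exp.mpr (le_trans (neg_le_abs _) (hM i))
          linarith
    _ = Real.exp (Real.sqrt S) * (2 * r) := by
          rw [Finset.sum_const]; simp; ring
  · -- √S ≤ √r * log T
    rw [hre, hSre]
    have hSle : S ≤ r * (Real.log T) ^ 2 := by
      calc S ≤ ∑ _i : Fin r, (Real.log T) ^ 2 := by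
            apply Finset.sum_le_sum
            intro i _
            calc (lam i) ^ 2 = |lam i| ^ 2 := (sq_abs _).symm
            _ ≤ (Real.log T) ^ 2 := by
                  apply sq_le_sq'
                  · linarith [abs_nonneg (lam i), hlogT i]
                  · exact hlogT i
      _ = r * (Real.log T) ^ 2 := by rw [Finset.sum_const]; simp
    calc Real.sqrt S ≤ Real.sqrt (r * (Real.log T) ^ 2) := Real.sqrt_le_sqrt hSle
    _ = Real.sqrt r * Real.log T := by
        rw [Real.sqrt_mul (by positivity)]
        congr 1
        rw [Real.sqrt_sq hlogTnn]
end

section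
/- Let h : ℝ → (r×r complex matrices) be a differentiable path such that h(t) is Hermitian positive definite for all t and h'(t) = −2·h(t)·Φ(t), where each Φ(t) is Hermitian with operator norm ‖Φ(t)‖_op ≤ C. Then for all t, the derivative of t ↦ log(tr h(t) + tr h(t)⁻¹) is at most 2C. -/
open scoped ComplexOrder

section Aux
open scoped Matrix.Norms.L2Operator
open Matrix

private lemma diag_nonneg' {n : ℕ} {A : Matrix (Fin n) (Fin n) ℂ} (hA : A.PosSemidef) (i : Fin n) :
    0 ≤ A i i := by
  have := hA.dotProduct_mulVec_nonneg (Pi.single i 1)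
  simpa [Matrix.mulVec_single, dotProduct, Pi.single_apply, apply_ite] using this

private lemma trace_nonneg' {n : ℕ} {A : Matrix (Fin n) (Fin n) ℂ} (hA : A.PosSemidef) :
    0 ≤ A.trace := by
  have : (0:ℂ) ≤ ∑ i, A i i := Finset.sum_nonneg fun i _ => diag_nonneg' hA i
  simpa [Matrix.trace, Matrix.diag] using this

private lemma trace_pos' {n : ℕ} (hn : 0 < n) {A : Matrix (Fin n) (Fin n) ℂ} (hA : A.PosDef) :
    0 < A.trace.re := by
  have hd : ∀ i : Fin n, 0 < (A i i).re := by
    intro i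
    have h1 : (Pi.single i 1 : Fin n → ℂ) ≠ 0 := by
      intro h
      have := congrFun h i
      simp at this
    have := hA.dotProduct_mulVec_pos h1
    have h2 : (0:ℂ) < A i i := by
      simpa [Matrix.mulVec_single, dotProduct, Pi.single_apply, apply_ite] using this
    exact (Complex.lt_def.mp h2).1
  have : (0:ℝ) < ∑ i, (A i i).re := by
    haveI : Nonempty (Fin n) := ⟨⟨0, hn⟩⟩
    exact Finset.sum_pos (fun i _ => hd i) Finset.univ_nonempty
  simpa [Matrix.trace, Matrix.diag, Complex.re_sum] using this

open scoped MatrixOrder in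
private lemma trace_mul_nonneg' {n : ℕ} {A B : Matrix (Fin n) (Fin n) ℂ}
    (hA : A.PosSemidef) (hB : B.PosSemidef) : 0 ≤ (A * B).trace := by
  have h1 : A * B = CFC.sqrt A * (CFC.sqrt A * B) := by
    rw [← mul_assoc, CFC.sqrt_mul_sqrt_self A (Matrix.nonneg_iff_posSemidef.mpr hA)]
  rw [h1, Matrix.trace_mul_comm]
  have h2 := hB.mul_mul_conjTranspose_same (CFC.sqrt A)
  rw [(Matrix.nonneg_iff_posSemidef.mp (CFC.sqrt_nonneg A)).isHermitian.eq] at h2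
  exact trace_nonneg' h2

private lemma shift_posSemidef {n : ℕ} {Φ : Matrix (Fin n) (Fin n) ℂ} {C : ℝ}
    (hh : Φ.IsHermitian) (hn : ‖Matrix.toEuclideanCLM (𝕜 := ℂ) Φ‖ ≤ C) (ε : ℝ)
    (hε : ε = 1 ∨ ε = -1) :
    Matrix.PosSemidef ((C : ℂ) • (1 : Matrix (Fin n) (Fin n) ℂ) + (ε : ℂ) • Φ) := by
  set T := Matrix.toEuclideanCLM (𝕜 := ℂ) Φ with hT
  have hTsa : _root_.IsSelfAdjoint T := by
    show star T = T
    rw [hT, ← map_star]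
    congr 1
  refine Matrix.posSemidef_iff_dotProduct_mulVec.mpr ⟨?_, ?_⟩
  · simp [Matrix.IsHermitian, Matrix.conjTranspose_smul, Matrix.conjTranspose_add, hh.eq,
      Complex.star_def, Complex.conj_ofReal]
  · intro x
    set y : EuclideanSpace ℂ (Fin n) := (WithLp.equiv 2 _).symm x with hy
    have hqy : star x ⬝ᵥ (Φ *ᵥ x) = (inner ℂ y (T y) : ℂ) := by
      rw [hT, hy, WithLp.equiv_symm_apply, Matrix.toEuclideanCLM_toLp,
        EuclideanSpace.inner_toLp_toLp, dotProduct_comm]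
    set q : ℂ := (inner ℂ y (T y) : ℂ) with hq
    have him : (starRingEnd ℂ) q = q := by
      rw [hq, inner_conj_symm, ← ContinuousLinearMap.adjoint_inner_right,
        ← ContinuousLinearMap.star_eq_adjoint, hTsa.star_eq]
    have habs : ‖q‖ ≤ C * ‖y‖ ^ 2 := by
      calc ‖q‖ = ‖(inner ℂ y (T y) : ℂ)‖ := rfl
        _ ≤ ‖y‖ * ‖T y‖ := norm_inner_le_norm _ _
        _ ≤ ‖y‖ * (‖T‖ * ‖y‖) := by
            gcongr
            exact T.le_opNorm y
        _ ≤ ‖y‖ * (C * ‖y‖) := by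
            have h0 : (0:ℝ) ≤ ‖y‖ := norm_nonneg _
            gcongr
        _ = C * ‖y‖ ^ 2 := by ring
    have hxx : star x ⬝ᵥ x = ((‖y‖ : ℂ)) ^ 2 := by
      rw [hy, WithLp.equiv_symm_apply]
      have := inner_self_eq_norm_sq_to_K (𝕜 := ℂ) (WithLp.toLp 2 x)
      rw [EuclideanSpace.inner_toLp_toLp, dotProduct_comm] at this
      exact this
    have hexp : star x ⬝ᵥ ((C : ℂ) • (1 : Matrix (Fin n) (Fin n) ℂ) + (ε : ℂ) • Φ) *ᵥ x
        = (C : ℂ) * (‖y‖ : ℂ) ^ 2 + (ε : ℂ) * q := by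
      rw [Matrix.add_mulVec, dotProduct_add, Matrix.smul_mulVec,
        Matrix.smul_mulVec, Matrix.one_mulVec, dotProduct_smul,
        dotProduct_smul, hxx, ← hqy]
      simp [smul_eq_mul]
    have h2 : ((‖y‖ : ℂ)) ^ 2 = ((‖y‖ ^ 2 : ℝ) : ℂ) := by push_cast; ring
    rw [h2] at hexp
    rw [hexp, Complex.le_def]
    have him0 : q.im = 0 := by
      have := congrArg Complex.im him
      simp at this
      linarith
    constructor
    · simp only [Complex.add_re, Complex.mul_re, Complex.ofReal_re, Complex.ofReal_im,
        Complex.zero_re, him0]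
      have hre : |q.re| ≤ C * ‖y‖ ^ 2 := (Complex.abs_re_le_norm q).trans habs
      rcases hε with h | h <;> rw [h] <;> nlinarith [abs_le.mp hre]
    · simp only [Complex.add_im, Complex.mul_im, him0, Complex.ofReal_im, Complex.ofReal_re,
        Complex.zero_im]
      ring

private lemma hasDerivAt_matrix {n : ℕ} {h : ℝ → Matrix (Fin n) (Fin n) ℂ}
    {H' : Matrix (Fin n) (Fin n) ℂ} {t : ℝ}
    (hd : ∀ i j, HasDerivAt (fun u => h u i j) (H' i j) t) :
    HasDerivAt h H' t := by
  have key : HasDerivAt (fun u => ∑ i : Fin n, ∑ j : Fin n,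
      (h u i j) • Matrix.single i j (1:ℂ))
      (∑ i : Fin n, ∑ j : Fin n, (H' i j) • Matrix.single i j (1:ℂ)) t := by
    refine HasDerivAt.fun_sum fun i _ => HasDerivAt.fun_sum fun j _ => ?_
    exact (hd i j).smul_const _
  have e : ∀ (A : Matrix (Fin n) (Fin n) ℂ),
      ∑ i : Fin n, ∑ j : Fin n, (A i j) • Matrix.single i j (1:ℂ) = A := by
    intro A
    conv_rhs => rw [matrix_eq_sum_single A]
    refine Finset.sum_congr rfl fun i _ => Finset.sum_congr rfl fun j _ => ?_
    rw [Matrix.smul_single, smul_eq_mul, mul_one]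
  simpa only [e] using key

private lemma hasDerivAt_trace_re {n : ℕ} {g : ℝ → Matrix (Fin n) (Fin n) ℂ}
    {G' : Matrix (Fin n) (Fin n) ℂ} {t : ℝ} (hd : HasDerivAt g G' t) :
    HasDerivAt (fun u => ((g u).trace).re) (G'.trace.re) t := by
  have tr : HasDerivAt (fun u => (g u).trace) (G'.trace) t := by
    have h2 := (((Matrix.traceLinearMap (Fin n) ℂ ℂ).toContinuousLinearMap).restrictScalars
      ℝ).hasFDerivAt.comp_hasDerivAt t hd
    exact h2
  have h3 := Complex.reCLM.hasFDerivAt.comp_hasDerivAt t tr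
  exact h3

private lemma hasDerivAt_inv' {n : ℕ} {h : ℝ → Matrix (Fin n) (Fin n) ℂ}
    {H' : Matrix (Fin n) (Fin n) ℂ} {t : ℝ} (hu : ∀ u, IsUnit (h u)) (hd : HasDerivAt h H' t) :
    HasDerivAt (fun u => (h u)⁻¹) (-((h t)⁻¹ * H' * (h t)⁻¹)) t := by
  have h1 : HasFDerivAt Ring.inverse
      (-ContinuousLinearMap.mulLeftRight ℂ _ (↑(hu t).unit⁻¹) (↑(hu t).unit⁻¹)) (h t) := by
    have := hasFDerivAt_ringInverse (𝕜 := ℂ) (hu t).unit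
    rwa [(hu t).unit_spec] at this
  have h2 := (h1.restrictScalars ℝ).comp_hasDerivAt t hd
  have h3 : (Ring.inverse ∘ h) = fun u => (h u)⁻¹ :=
    funext fun u => (Matrix.nonsing_inv_eq_ringInverse (h u)).symm
  have h4 : (↑(hu t).unit⁻¹ : Matrix (Fin n) (Fin n) ℂ) = (h t)⁻¹ := by
    rw [Matrix.coe_units_inv, (hu t).unit_spec]
  rw [h3] at h2
  simp only [ContinuousLinearMap.coe_restrictScalars', ContinuousLinearMap.neg_apply,
    ContinuousLinearMap.mulLeftRight_apply, h4] at h2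
  exact h2

end Aux

open scoped Matrix.Norms.L2Operator

/-- If `h(t)` is a differentiable path of Hermitian positive definite matrices
with `h'(t) = −2·h(t)·Φ(t)` where each `Φ(t)` is Hermitian of operator norm
`≤ C`, then the derivative of `t ↦ log(tr h(t) + tr h(t)⁻¹)` is at most `2C`. -/
theorem stmt6 (r : ℕ) (C : ℝ)
    (h Φ : ℝ → Matrix (Fin r) (Fin r) ℂ)
    (hpos : ∀ t, (h t).PosDef)
    (hherm : ∀ t, (h t).IsHermitian)
    (hΦherm : ∀ t, (Φ t).IsHermitian)
    (hΦnorm : ∀ t, ‖Matrix.toEuclideanCLM (𝕜 := ℂ) (Φ t)‖ ≤ C)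
    (hderiv : ∀ t, ∀ i j, HasDerivAt (fun u => h u i j)
      (((-2 : ℂ) • (h t * Φ t)) i j) t) :
    ∀ t, deriv (fun u => Real.log ((h u).trace.re + ((h u)⁻¹).trace.re)) t
      ≤ 2 * C := by
  intro t
  have hC0 : 0 ≤ C := le_trans (norm_nonneg _) (hΦnorm 0)
  rcases Nat.eq_zero_or_pos r with hr | hr
  · subst hr
    have hconst : (fun u : ℝ => Real.log ((h u).trace.re + ((h u)⁻¹).trace.re))
        = fun _ => Real.log 0 := by
      funext u
      have h1 : (h u).trace = 0 := by simp [Matrix.trace]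
      have h2 : ((h u)⁻¹).trace = 0 := by simp [Matrix.trace]
      rw [h1, h2]
      norm_num
    rw [hconst, deriv_const]
    linarith
  · set A := h t with hA
    set H' : Matrix (Fin r) (Fin r) ℂ := (-2:ℂ) • (h t * Φ t) with hH'
    have hmat : HasDerivAt h H' t := hasDerivAt_matrix (fun i j => hderiv t i j)
    have hAu : ∀ u, IsUnit (h u) := fun u => (hpos u).isUnit
    have hinv := hasDerivAt_inv' hAu hmat
    have h1 := hasDerivAt_trace_re hmat
    have h2 := hasDerivAt_trace_re hinv
    have hf : HasDerivAt (fun u => (h u).trace.re + ((h u)⁻¹).trace.re)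
        (H'.trace.re + (-(A⁻¹ * H' * A⁻¹)).trace.re) t := h1.add h2
    have hposA : 0 < A.trace.re := trace_pos' hr (hpos t)
    have hposAinv : 0 < (A⁻¹).trace.re := trace_pos' hr (hpos t).inv
    have hfpos : 0 < (h t).trace.re + ((h t)⁻¹).trace.re := by
      rw [← hA]; linarith
    have hlog := hf.log (ne_of_gt hfpos)
    rw [hlog.deriv]
    rw [div_le_iff₀ hfpos]
    -- Bound 1 : H'.trace.re ≤ 2*C*A.trace.re
    have hP1 := shift_posSemidef (hΦherm t) (hΦnorm t) 1 (Or.inl rfl)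
    have hP2 := shift_posSemidef (hΦherm t) (hΦnorm t) (-1) (Or.inr rfl)
    have hk1 : (0:ℂ) ≤ (A * ((C : ℂ) • (1 : Matrix (Fin r) (Fin r) ℂ) + ((1:ℝ) : ℂ) • Φ t)).trace :=
      trace_mul_nonneg' (hpos t).posSemidef hP1
    have hk1' : (0:ℝ) ≤ C * A.trace.re + (A * Φ t).trace.re := by
      have hexp : (A * ((C : ℂ) • (1 : Matrix (Fin r) (Fin r) ℂ) + ((1:ℝ) : ℂ) • Φ t)).trace
          = (C : ℂ) * A.trace + (A * Φ t).trace := by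
        rw [Matrix.mul_add, Matrix.trace_add]
        simp [Matrix.mul_smul, Matrix.trace_smul, smul_eq_mul]
      rw [hexp] at hk1
      have := (Complex.le_def.mp hk1).1
      simpa [Complex.add_re, Complex.mul_re] using this
    have hb1 : H'.trace.re ≤ 2 * C * A.trace.re := by
      have : H'.trace = (-2 : ℂ) * (A * Φ t).trace := by
        rw [hH', Matrix.trace_smul, smul_eq_mul, hA]
      rw [this]
      have hre : ((-2 : ℂ) * (A * Φ t).trace).re = -2 * ((A * Φ t).trace).re := by
        simp [Complex.mul_re]
      rw [hre]
      linarith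
    -- Bound 2
    have hsimp : -(A⁻¹ * H' * A⁻¹) = (2:ℂ) • (Φ t * A⁻¹) := by
      have hdet : A⁻¹ * A = 1 := Matrix.nonsing_inv_mul A (Matrix.isUnit_iff_isUnit_det A |>.mp (hpos t).isUnit)
      rw [hH', ← hA]
      rw [Matrix.mul_smul, Matrix.smul_mul, ← mul_assoc, hdet, one_mul]
      simp [smul_smul]
    have hk2 : (0:ℂ) ≤ ((((C : ℂ) • (1 : Matrix (Fin r) (Fin r) ℂ) + ((-1:ℝ) : ℂ) • Φ t)) * A⁻¹).trace :=
      trace_mul_nonneg' hP2 (hpos t).inv.posSemidef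
    have hk2' : (0:ℝ) ≤ C * (A⁻¹).trace.re - (Φ t * A⁻¹).trace.re := by
      have hexp : ((((C : ℂ) • (1 : Matrix (Fin r) (Fin r) ℂ) + ((-1:ℝ) : ℂ) • Φ t)) * A⁻¹).trace
          = (C : ℂ) * (A⁻¹).trace - (Φ t * A⁻¹).trace := by
        rw [Matrix.add_mul, Matrix.trace_add]
        simp [Matrix.smul_mul, Matrix.trace_smul, smul_eq_mul]
        ring
      rw [hexp] at hk2
      have := (Complex.le_def.mp hk2).1
      simpa [Complex.sub_re, Complex.mul_re] using this
    have hb2 : (-(A⁻¹ * H' * A⁻¹)).trace.re ≤ 2 * C * (A⁻¹).trace.re := by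
      rw [hsimp, Matrix.trace_smul]
      have : ((2:ℂ) • (Φ t * A⁻¹).trace).re = 2 * ((Φ t * A⁻¹).trace).re := by
        simp [smul_eq_mul, Complex.mul_re]
      rw [this]
      linarith
    have : (h t).trace.re = A.trace.re := by rw [hA]
    nlinarith [hb1, hb2, hposA, hposAinv]
end
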